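/- Let S be a pre-Hilbert space and L a pre-Hilbert space logic on S. If L contains a subspace B which is not splitting (B + B^⊥ ≠ S), then every state on (S, L) is free, i.e. vanishes on all one-dimensional subspaces of S that belong to L. Conversely, if L ⊆ E(S) (every member of L is splitting), then (S, L) admits a non-free state. Hence (S,L) has a non-free state if and only if every member of L is splitting. -/

import Mathlib

variable {𝕜 S : Type*} [RCLike 𝕜] [NormedAddCommGroup S] [InnerProductSpace 𝕜 S]

/-- A pre-Hilbert space logic on a pre-Hilbert space `S`: a family of orthogonally closed
linear subspaces containing `{0}`, closed under orthocomplementation and under the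
addition of one-dimensional subspaces. -/
def IsPreHilbertLogic (L : Set (Submodule 𝕜 S)) : Prop :=
  (∀ M ∈ L, Mᗮᗮ = M) ∧ (⊥ : Submodule 𝕜 S) ∈ L ∧ (∀ M ∈ L, Mᗮ ∈ L) ∧
    ∀ M ∈ L, ∀ u : S, M ⊔ (𝕜 ∙ u) ∈ L

/-- A state on a pre-Hilbert space logic `(S, L)`: a `[0,1]`-valued map with `s(S) = 1`,
additive on orthogonal pairs whose join lies in `L`. -/
def IsLogicState (L : Set (Submodule 𝕜 S)) (s : Submodule 𝕜 S → ℝ) : Prop :=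
  (∀ M ∈ L, s M ∈ Set.Icc (0 : ℝ) 1) ∧ s (⊤ : Submodule 𝕜 S) = 1 ∧
    ∀ A B : Submodule 𝕜 S, A ∈ L → B ∈ L → A ≤ Bᗮ → (A ⊔ B)ᗮᗮ ∈ L →
      s ((A ⊔ B)ᗮᗮ) = s A + s B

open Submodule

local notation "⟪" x ", " y "⟫" => @inner 𝕜 _ _ x y

/-- Orthogonal complements commute with images under isometric automorphisms. -/
lemma map_orthogonal' (T : S ≃ₗᵢ[𝕜] S) (M : Submodule 𝕜 S) :
    (Submodule.map (T.toLinearEquiv : S →ₗ[𝕜] S) M)ᗮ = Submodule.map (T.toLinearEquiv : S →ₗ[𝕜] S) Mᗮ := by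
  ext v
  simp only [Submodule.mem_orthogonal, Submodule.mem_map,
    LinearIsometryEquiv.coe_toLinearEquiv]
  constructor
  · intro h
    refine ⟨T.symm v, fun m hm => ?_, by simp⟩
    have h1 := h (T m) ⟨m, hm, rfl⟩
    have h2 : ⟪m, T.symm v⟫ = ⟪T m, T (T.symm v)⟫ := (T.inner_map_map m (T.symm v)).symm
    rw [h2, T.apply_symm_apply]; exact h1
  · rintro ⟨w, hw, rfl⟩ m ⟨m', hm', rfl⟩
    exact (T.inner_map_map m' w).trans (hw m' hm')

/-- Transitivity of the unitary group on one-dimensional subspaces. -/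
lemma line_transitive {x u : S} (hx : x ≠ 0) (hu : u ≠ 0) :
    ∃ T : S ≃ₗᵢ[𝕜] S, Submodule.map (T.toLinearEquiv : S →ₗ[𝕜] S) (𝕜 ∙ x) = 𝕜 ∙ u := by
  classical
  set a : 𝕜 := ⟪x, u⟫ with ha
  set γ : 𝕜 := if a = 0 then 1 else (starRingEnd 𝕜) a / (‖a‖ : 𝕜) with hγ
  have hγnorm : ‖γ‖ = 1 := by
    rw [hγ]
    split_ifs with h
    · simp
    · rw [norm_div, RCLike.norm_conj, RCLike.norm_ofReal, abs_norm, div_self (norm_ne_zero_iff.2 h)]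
  have hγa : γ * a = (‖a‖ : 𝕜) := by
    rw [hγ]
    split_ifs with h
    · simp [h]
    · rw [div_mul_eq_mul_div, RCLike.conj_mul, ← RCLike.ofReal_pow, sq,
        ← RCLike.ofReal_div, mul_div_assoc, div_self (by exact_mod_cast norm_ne_zero_iff.2 h),
        mul_one]
  set μ : 𝕜 := ((‖x‖ / ‖u‖ : ℝ) : 𝕜) * γ with hμ
  have hμ0 : μ ≠ 0 := by
    rw [hμ]
    apply mul_ne_zero
    · exact_mod_cast div_ne_zero (norm_ne_zero_iff.2 hx) (norm_ne_zero_iff.2 hu)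
    · intro h; rw [h] at hγnorm; simp at hγnorm
  set v : S := μ • u with hv
  have hspanv : (𝕜 ∙ v) = 𝕜 ∙ u := span_singleton_smul_eq (IsUnit.mk0 μ hμ0) u
  set r : ℝ := ‖x‖ / ‖u‖ * ‖a‖ with hr
  have hxv : ⟪x, v⟫ = (r : 𝕜) := by
    rw [hv, inner_smul_right, hμ, mul_assoc, ← ha, hγa, hr, RCLike.ofReal_mul]
  have hvx : ⟪v, x⟫ = (r : 𝕜) := by
    rw [← inner_conj_symm, hxv, RCLike.conj_ofReal]
  have hnv : ‖v‖ = ‖x‖ := by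
    rw [hv, norm_smul, hμ, norm_mul, RCLike.norm_ofReal, hγnorm, mul_one,
      abs_of_nonneg (div_nonneg (norm_nonneg _) (norm_nonneg _)),
      div_mul_cancel₀ _ (norm_ne_zero_iff.2 hu)]
  set w : S := x - v with hw
  by_cases hw0 : w = 0
  · -- x = v, the spans agree, use the identity
    refine ⟨LinearIsometryEquiv.refl 𝕜 S, ?_⟩
    have : x = v := by rwa [hw, sub_eq_zero] at hw0
    rw [this]
    rw [← hspanv]
    ext z
    simp [Submodule.mem_map]
  · have hkey : ⟪w, w⟫ = 2 * ⟪w, x⟫ := by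
      rw [hw, inner_sub_sub_self, inner_sub_left, hxv, hvx,
        inner_self_eq_norm_sq_to_K, inner_self_eq_norm_sq_to_K, hnv]
      ring
    set K : Submodule 𝕜 S := (𝕜 ∙ w)ᗮ with hK
    set q : S := (2 : 𝕜)⁻¹ • w with hq
    have hp : x - q ∈ K := by
      rw [hK, mem_orthogonal_singleton_iff_inner_right, inner_sub_right, hq,
        inner_smul_right, hkey]
      ring
    have hqmem : q ∈ Kᗮ := by
      rw [hK]
      exact (𝕜 ∙ w).le_orthogonal_orthogonal (smul_mem _ _ (mem_span_singleton_self w))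
    refine ⟨reflection K, ?_⟩
    have hTx : reflection K x = v := by
      have : x = (x - q) + q := by abel
      rw [this, map_add, reflection_mem_subspace_eq_self hp,
        reflection_mem_subspace_orthogonalComplement_eq_neg hqmem, hq]
      have h2 : (2 : 𝕜)⁻¹ • w + (2 : 𝕜)⁻¹ • w = w := by
        rw [← add_smul]; norm_num
      calc x - (2:𝕜)⁻¹ • w + -((2:𝕜)⁻¹ • w) = x - ((2:𝕜)⁻¹ • w + (2:𝕜)⁻¹ • w) := by abel
        _ = x - w := by rw [h2]
        _ = v := by rw [hw]; abel
    rw [← hspanv, ← hTx]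
    rw [Submodule.map_span, Set.image_singleton]
    rfl

lemma top_mem {L : Set (Submodule 𝕜 S)} (hL : IsPreHilbertLogic L) : (⊤ : Submodule 𝕜 S) ∈ L := by
  have := hL.2.2.1 ⊥ hL.2.1
  rwa [Submodule.bot_orthogonal_eq_top] at this

lemma span_mem {L : Set (Submodule 𝕜 S)} (hL : IsPreHilbertLogic L) (u : S) : (𝕜 ∙ u) ∈ L := by
  have := hL.2.2.2 ⊥ hL.2.1 u
  rwa [bot_sup_eq] at this

lemma s_compl {L : Set (Submodule 𝕜 S)} {s : Submodule 𝕜 S → ℝ} (hL : IsPreHilbertLogic L)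
    (hs : IsLogicState L s) {M : Submodule 𝕜 S} (hM : M ∈ L) : s M + s Mᗮ = 1 := by
  have hjoin : (M ⊔ Mᗮ)ᗮᗮ = (⊤ : Submodule 𝕜 S) := by
    rw [← Submodule.inf_orthogonal, hL.1 M hM, inf_comm, Submodule.inf_orthogonal_eq_bot,
      Submodule.bot_orthogonal_eq_top]
  have := hs.2.2 M Mᗮ hM (hL.2.2.1 M hM) M.le_orthogonal_orthogonal
    (by rw [hjoin]; exact top_mem hL)
  rw [hjoin, hs.2.1] at this
  exact this.symm

lemma s_bot {L : Set (Submodule 𝕜 S)} {s : Submodule 𝕜 S → ℝ} (hL : IsPreHilbertLogic L)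
    (hs : IsLogicState L s) : s (⊥ : Submodule 𝕜 S) = 0 := by
  have hjoin : ((⊥ : Submodule 𝕜 S) ⊔ ⊥)ᗮᗮ = (⊥ : Submodule 𝕜 S) := by
    rw [sup_idem, Submodule.bot_orthogonal_eq_top, Submodule.top_orthogonal_eq_bot]
  have := hs.2.2 ⊥ ⊥ hL.2.1 hL.2.1 bot_le (by rw [hjoin]; exact hL.2.1)
  rw [hjoin] at this
  linarith

/-- Core lemma: if `B ∈ L` and `x ∉ B ⊔ Bᗮ` then any state vanishes on `𝕜 ∙ x`. -/
lemma state_vanishes_on_outside_line {L : Set (Submodule 𝕜 S)} {s : Submodule 𝕜 S → ℝ}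
    (hL : IsPreHilbertLogic L) (hs : IsLogicState L s) {B : Submodule 𝕜 S} (hB : B ∈ L)
    {x : S} (hx : x ∉ B ⊔ Bᗮ) : s (𝕜 ∙ x) = 0 := by
  have hBo : Bᗮ ∈ L := hL.2.2.1 B hB
  set C : Submodule 𝕜 S := B ⊔ (𝕜 ∙ x) with hCdef
  set D : Submodule 𝕜 S := Bᗮ ⊔ (𝕜 ∙ x) with hDdef
  have hC : C ∈ L := hL.2.2.2 B hB x
  have hD : D ∈ L := hL.2.2.2 Bᗮ hBo x
  have hCo : Cᗮ ∈ L := hL.2.2.1 C hC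
  have hDo : Dᗮ ∈ L := hL.2.2.1 D hD
  -- C ⊓ Bᗮ = ⊥
  have hCB : C ⊓ Bᗮ = ⊥ := by
    rw [eq_bot_iff]
    rintro v ⟨hvC, hvB⟩
    obtain ⟨b, hb, z, hz, rfl⟩ := Submodule.mem_sup.1 hvC
    obtain ⟨c, rfl⟩ := Submodule.mem_span_singleton.1 hz
    rcases eq_or_ne c 0 with rfl | hc
    · rw [zero_smul, add_zero] at hvB ⊢
      have : b ∈ B ⊓ Bᗮ := ⟨hb, hvB⟩
      rw [Submodule.inf_orthogonal_eq_bot] at this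
      exact this
    · exfalso
      apply hx
      have h1 : b + c • x - b ∈ B ⊔ Bᗮ :=
        sub_mem (le_sup_right (a := B) hvB) (le_sup_left (b := Bᗮ) hb)
      rw [add_sub_cancel_left] at h1
      have := Submodule.smul_mem _ c⁻¹ h1
      rwa [inv_smul_smul₀ hc] at this
  -- D ⊓ B = ⊥
  have hDB : D ⊓ B = ⊥ := by
    rw [eq_bot_iff]
    rintro v ⟨hvD, hvB⟩
    obtain ⟨b, hb, z, hz, rfl⟩ := Submodule.mem_sup.1 hvD
    obtain ⟨c, rfl⟩ := Submodule.mem_span_singleton.1 hz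
    rcases eq_or_ne c 0 with rfl | hc
    · rw [zero_smul, add_zero] at hvB ⊢
      have : b ∈ B ⊓ Bᗮ := ⟨hvB, hb⟩
      rw [Submodule.inf_orthogonal_eq_bot] at this
      exact this
    · exfalso
      apply hx
      have h1 : b + c • x - b ∈ B ⊔ Bᗮ :=
        sub_mem (le_sup_left (b := Bᗮ) hvB) (le_sup_right (a := B) hb)
      rw [add_sub_cancel_left] at h1
      have := Submodule.smul_mem _ c⁻¹ h1
      rwa [inv_smul_smul₀ hc] at this
  -- C ⊓ D = 𝕜 ∙ x
  have hCD : C ⊓ D = 𝕜 ∙ x := by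
    apply le_antisymm
    · rintro v ⟨hvC, hvD⟩
      obtain ⟨b, hb, z, hz, hveq⟩ := Submodule.mem_sup.1 hvC
      obtain ⟨c, rfl⟩ := Submodule.mem_span_singleton.1 hz
      obtain ⟨b', hb', z', hz', hveq'⟩ := Submodule.mem_sup.1 hvD
      obtain ⟨c', rfl⟩ := Submodule.mem_span_singleton.1 hz'
      have hcc : c = c' := by
        by_contra hne
        apply hx
        have h1 : b - b' = (c' - c) • x := by
          have : b + c • x = b' + c' • x := hveq.trans hveq'.symm
          rw [sub_smul]
          rw [eq_sub_iff_add_eq]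
          calc b - b' + c • x = b + c • x - b' := by abel
            _ = c' • x := by rw [this]; abel
        have h2 : b - b' ∈ B ⊔ Bᗮ :=
          sub_mem (le_sup_left (b := Bᗮ) hb) (le_sup_right (a := B) hb')
        rw [h1] at h2
        have := Submodule.smul_mem _ (c' - c)⁻¹ h2
        rwa [inv_smul_smul₀ (sub_ne_zero.2 (Ne.symm hne))] at this
      have hbb : b = b' := by
        have : b + c • x = b' + c' • x := hveq.trans hveq'.symm
        rw [hcc] at this
        exact add_right_cancel this
      have : b ∈ B ⊓ Bᗮ := ⟨hb, hbb ▸ hb'⟩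
      rw [Submodule.inf_orthogonal_eq_bot, Submodule.mem_bot] at this
      rw [← hveq, this, zero_add]
      exact Submodule.smul_mem _ _ (mem_span_singleton_self x)
    · exact le_inf le_sup_right le_sup_right
  -- s Cᗮ = 1 - s B
  have h2 : s Cᗮ + s B = 1 := by
    have hjoin : (Cᗮ ⊔ B)ᗮᗮ = (⊤ : Submodule 𝕜 S) := by
      rw [← Submodule.inf_orthogonal, hL.1 C hC, hCB, Submodule.bot_orthogonal_eq_top]
    have := hs.2.2 Cᗮ B hCo hB (Submodule.orthogonal_le le_sup_left)
      (by rw [hjoin]; exact top_mem hL)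
    rw [hjoin, hs.2.1] at this
    exact this.symm
  -- s Dᗮ = 1 - s Bᗮ
  have h3 : s Dᗮ + s Bᗮ = 1 := by
    have hjoin : (Dᗮ ⊔ Bᗮ)ᗮᗮ = (⊤ : Submodule 𝕜 S) := by
      rw [← Submodule.inf_orthogonal, hL.1 D hD, hL.1 B hB, hDB,
        Submodule.bot_orthogonal_eq_top]
    have hle : Dᗮ ≤ Bᗮᗮ := Submodule.orthogonal_le le_sup_left
    have := hs.2.2 Dᗮ Bᗮ hDo hBo hle (by rw [hjoin]; exact top_mem hL)
    rw [hjoin, hs.2.1] at this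
    exact this.symm
  -- s (𝕜 ∙ x)ᗮ = s Dᗮ + s Cᗮ
  have h4 : s ((𝕜 ∙ x)ᗮ) = s Dᗮ + s Cᗮ := by
    have hjoin : (Dᗮ ⊔ Cᗮ)ᗮᗮ = (𝕜 ∙ x)ᗮ := by
      rw [← Submodule.inf_orthogonal, hL.1 D hD, hL.1 C hC, inf_comm, hCD]
    have hle : Dᗮ ≤ Cᗮᗮ := by
      rw [hL.1 C hC]
      calc Dᗮ ≤ Bᗮᗮ := Submodule.orthogonal_le le_sup_left
        _ = B := hL.1 B hB
        _ ≤ C := le_sup_left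
    have := hs.2.2 Dᗮ Cᗮ hDo hCo hle
      (by rw [hjoin]; exact hL.2.2.1 _ (span_mem hL x))
    rw [hjoin] at this
    exact this
  have h1 : s B + s Bᗮ = 1 := s_compl hL hs hB
  have h5 : s (𝕜 ∙ x) + s ((𝕜 ∙ x)ᗮ) = 1 := s_compl hL hs (span_mem hL x)
  linarith

/-- Pulling back a state along an isometric automorphism gives a state. -/
lemma state_pullback {L : Set (Submodule 𝕜 S)} {s : Submodule 𝕜 S → ℝ}
    (hs : IsLogicState L s)
    (hsymm : ∀ (U : S ≃ₗᵢ[𝕜] S), ∀ M ∈ L, Submodule.map (U.toLinearEquiv : S →ₗ[𝕜] S) M ∈ L)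
    (T : S ≃ₗᵢ[𝕜] S) :
    IsLogicState L (fun M => s (Submodule.map (T.toLinearEquiv : S →ₗ[𝕜] S) M)) := by
  refine ⟨fun M hM => hs.1 _ (hsymm T M hM), ?_, ?_⟩
  · have : Submodule.map (T.toLinearEquiv : S →ₗ[𝕜] S) (⊤ : Submodule 𝕜 S) = ⊤ := by
      rw [Submodule.map_top]
      exact LinearEquiv.range T.toLinearEquiv
    simp only [this, hs.2.1]
  · intro A B hA hB hAB hjoin
    have hmapo : ∀ M : Submodule 𝕜 S,
        Submodule.map (T.toLinearEquiv : S →ₗ[𝕜] S) (Mᗮ) = (Submodule.map (T.toLinearEquiv : S →ₗ[𝕜] S) M)ᗮ :=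
      fun M => (map_orthogonal' T M).symm
    have hkey : Submodule.map (T.toLinearEquiv : S →ₗ[𝕜] S) ((A ⊔ B)ᗮᗮ) =
        ((Submodule.map (T.toLinearEquiv : S →ₗ[𝕜] S) A ⊔ Submodule.map (T.toLinearEquiv : S →ₗ[𝕜] S) B)ᗮᗮ) := by
      rw [hmapo, hmapo, Submodule.map_sup]
    simp only [hkey]
    exact hs.2.2 _ _ (hsymm T A hA) (hsymm T B hB)
      (by rw [← hmapo]; exact Submodule.map_mono hAB)
      (by rw [← hkey]; exact hsymm T _ hjoin)

/-- If a state vanishes on all lines, it vanishes on finite-dimensional members of `L`. -/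
lemma state_vanishes_findim {L : Set (Submodule 𝕜 S)} {s : Submodule 𝕜 S → ℝ}
    (hL : IsPreHilbertLogic L) (hs : IsLogicState L s)
    (hfree : ∀ u : S, u ≠ 0 → s (𝕜 ∙ u) = 0) :
    ∀ M ∈ L, FiniteDimensional 𝕜 M → s M = 0 := by
  suffices h : ∀ n : ℕ, ∀ M ∈ L, ∀ _ : FiniteDimensional 𝕜 M,
      Module.finrank 𝕜 M = n → s M = 0 by
    intro M hM hfin
    exact h (Module.finrank 𝕜 M) M hM hfin rfl
  intro n
  induction n using Nat.strong_induction_on with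
  | _ n ih =>
    intro M hM hfin hrank
    rcases eq_or_ne M ⊥ with rfl | hMbot
    · exact s_bot hL hs
    · obtain ⟨u, huM, hu0⟩ := Submodule.ne_bot_iff M |>.1 hMbot
      set M' : Submodule 𝕜 S := (Mᗮ ⊔ (𝕜 ∙ u))ᗮ with hM'def
      have hM' : M' ∈ L := hL.2.2.1 _ (hL.2.2.2 Mᗮ (hL.2.2.1 M hM) u)
      have hM'eq : M' = M ⊓ (𝕜 ∙ u)ᗮ := by
        rw [hM'def, ← Submodule.inf_orthogonal, hL.1 M hM]
      have hM'leM : M' ≤ M := by rw [hM'eq]; exact inf_le_left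
      have hM'perp : M' ≤ (𝕜 ∙ u)ᗮ := by rw [hM'eq]; exact inf_le_right
      have hsup : M' ⊔ (𝕜 ∙ u) = M := by
        apply le_antisymm
        · exact sup_le hM'leM ((Submodule.span_singleton_le_iff_mem u M).2 huM)
        · intro m hm
          set c : 𝕜 := ⟪u, m⟫ / ⟪u, u⟫ with hc
          have huu : ⟪u, u⟫ ≠ 0 := by
            rw [inner_self_ne_zero]; exact hu0
          have h1 : m - c • u ∈ M' := by
            rw [hM'eq, Submodule.mem_inf]
            refine ⟨sub_mem hm (Submodule.smul_mem _ _ huM), ?_⟩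
            rw [Submodule.mem_orthogonal_singleton_iff_inner_right, inner_sub_right,
              inner_smul_right, hc, div_mul_cancel₀ _ huu, sub_self]
          have h2 : m = (m - c • u) + c • u := by abel
          rw [h2]
          exact Submodule.add_mem _ (le_sup_left (b := 𝕜 ∙ u) h1)
            (le_sup_right (a := M') (Submodule.smul_mem _ _ (mem_span_singleton_self u)))
      have hadd : s M = s M' + s (𝕜 ∙ u) := by
        have hjoin : (M' ⊔ (𝕜 ∙ u))ᗮᗮ = M := by rw [hsup, hL.1 M hM]
        have := hs.2.2 M' (𝕜 ∙ u) hM' (span_mem hL u) hM'perp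
          (by rw [hjoin]; exact hM)
        rwa [hjoin] at this
      have hfin' : FiniteDimensional 𝕜 M' := Submodule.finiteDimensional_of_le hM'leM
      have hlt : M' < M := by
        refine lt_of_le_of_ne hM'leM ?_
        intro he
        have : u ∈ M' := he ▸ huM
        have := hM'perp this
        rw [Submodule.mem_orthogonal_singleton_iff_inner_right, inner_self_eq_zero] at this
        exact hu0 this
      have hrank' : Module.finrank 𝕜 M' < n := by
        rw [← hrank]
        exact Submodule.finrank_lt_finrank_of_lt hlt
      have := ih _ hrank' M' hM' hfin' rfl
      rw [hadd, this, hfree u hu0, add_zero]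

/-- If every member of `L` splits, there is a non-free state (a vector state). -/
lemma exists_nonfree_state [Nontrivial S] {L : Set (Submodule 𝕜 S)}
    (hL : IsPreHilbertLogic L) (hsplit : ∀ M ∈ L, M ⊔ Mᗮ = ⊤) :
    ∃ s : Submodule 𝕜 S → ℝ, IsLogicState L s ∧
      ∃ M ∈ L, FiniteDimensional 𝕜 M ∧ s M ≠ 0 := by
  classical
  obtain ⟨e, he0⟩ := exists_ne (0 : S)
  set e₀ : S := ((‖e‖ : ℝ)⁻¹ : 𝕜) • e with he₀def
  have hne : ‖e₀‖ = 1 := by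
    rw [he₀def, norm_smul, norm_inv, RCLike.norm_ofReal, abs_norm,
      inv_mul_cancel₀ (norm_ne_zero_iff.2 he0)]
  have he₀0 : e₀ ≠ 0 := by
    intro h; rw [h, norm_zero] at hne; norm_num at hne
  set P : Submodule 𝕜 S → S → Prop := fun M m => m ∈ M ∧ e₀ - m ∈ Mᗮ with hP
  have huniq : ∀ M m m', P M m → P M m' → m = m' := by
    intro M m m' ⟨hm, hm'⟩ ⟨hn, hn'⟩
    have h1 : m - m' ∈ M := sub_mem hm hn
    have h2 : m - m' ∈ Mᗮ := by
      have : m - m' = (e₀ - m') - (e₀ - m) := by abel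
      rw [this]; exact sub_mem hn' hm'
    have := Submodule.inner_right_of_mem_orthogonal h1 h2
    rwa [inner_self_eq_zero, sub_eq_zero] at this
  set s : Submodule 𝕜 S → ℝ := fun M => if h : ∃ m, P M m then ‖h.choose‖ ^ 2 else 0
    with hsdef
  have hspec : ∀ M m, P M m → s M = ‖m‖ ^ 2 := by
    intro M m hm
    have hex : ∃ m, P M m := ⟨m, hm⟩
    rw [hsdef]
    simp only [dif_pos hex]
    rw [huniq M hex.choose m hex.choose_spec hm]
  have hnormsq : ∀ M m, P M m → ‖m‖ ^ 2 + ‖e₀ - m‖ ^ 2 = 1 := by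
    intro M m ⟨hm, hm'⟩
    have horth : ⟪m, e₀ - m⟫ = 0 :=
      Submodule.inner_right_of_mem_orthogonal hm hm'
    have := norm_add_sq_eq_norm_sq_add_norm_sq_of_inner_eq_zero m (e₀ - m) horth
    rw [add_sub_cancel, hne] at this
    rw [pow_two, pow_two]; linarith
  refine ⟨s, ⟨?_, ?_, ?_⟩, 𝕜 ∙ e₀, ?_, ?_, ?_⟩
  · -- Icc
    intro M _
    by_cases h : ∃ m, P M m
    · rw [hspec M h.choose h.choose_spec]
      have := hnormsq M h.choose h.choose_spec
      constructor
      · positivity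
      · nlinarith [sq_nonneg ‖e₀ - h.choose‖]
    · have hz : s M = 0 := by simp only [hsdef]; rw [dif_neg h]
      rw [hz]; exact ⟨le_refl 0, by norm_num⟩
  · -- top
    have : P ⊤ e₀ := ⟨trivial, by rw [sub_self]; exact zero_mem _⟩
    rw [hspec ⊤ e₀ this, hne]; norm_num
  · -- additivity
    intro A B hA hB hAB hJ
    have hsplA := hsplit A hA
    have hsplB := hsplit B hB
    have hea : e₀ ∈ A ⊔ Aᗮ := by rw [hsplA]; trivial
    have heb : e₀ ∈ B ⊔ Bᗮ := by rw [hsplB]; trivial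
    obtain ⟨a, haA, a', haA', hae⟩ := Submodule.mem_sup.1 hea
    obtain ⟨b, hbB, b', hbB', hbe⟩ := Submodule.mem_sup.1 heb
    have hPA : P A a := ⟨haA, by rw [← hae, add_sub_cancel_left]; exact haA'⟩
    have hPB : P B b := ⟨hbB, by rw [← hbe, add_sub_cancel_left]; exact hbB'⟩
    have hBAo : B ≤ Aᗮ :=
      le_trans B.le_orthogonal_orthogonal (Submodule.orthogonal_le hAB)
    have hPC : P ((A ⊔ B)ᗮᗮ) (a + b) := by
      constructor
      · exact (A ⊔ B).le_orthogonal_orthogonal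
          (Submodule.add_mem _ (le_sup_left (b := B) haA) (le_sup_right (a := A) hbB))
      · have h1 : e₀ - (a + b) ∈ Aᗮ := by
          have : e₀ - (a + b) = (e₀ - a) - b := by abel
          rw [this]; exact sub_mem hPA.2 (hBAo hbB)
        have h2 : e₀ - (a + b) ∈ Bᗮ := by
          have : e₀ - (a + b) = (e₀ - b) - a := by abel
          rw [this]; exact sub_mem hPB.2 (hAB haA)
        have h3 : e₀ - (a + b) ∈ (A ⊔ B)ᗮ := by
          rw [← Submodule.inf_orthogonal]; exact ⟨h1, h2⟩
        exact (A ⊔ B)ᗮ.le_orthogonal_orthogonal h3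
    have hab : ⟪a, b⟫ = 0 := by
      have := Submodule.inner_right_of_mem_orthogonal hbB (hAB haA)
      rw [← inner_conj_symm, this, map_zero]
    have hsum := norm_add_sq_eq_norm_sq_add_norm_sq_of_inner_eq_zero a b hab
    rw [hspec _ _ hPC, hspec _ _ hPA, hspec _ _ hPB, pow_two, pow_two, pow_two]
    linarith
  · -- span e₀ ∈ L
    have := hL.2.2.2 ⊥ hL.2.1 e₀
    rwa [bot_sup_eq] at this
  · exact inferInstance
  · have : P (𝕜 ∙ e₀) e₀ :=
      ⟨mem_span_singleton_self e₀, by rw [sub_self]; exact zero_mem _⟩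
    rw [hspec _ _ this, hne]
    norm_num

/-- If `L` contains a non-splitting member, every state on `(S, L)` is free. -/
lemma state_free_of_nonsplitting {L : Set (Submodule 𝕜 S)} (hL : IsPreHilbertLogic L)
    (hsymm : ∀ (U : S ≃ₗᵢ[𝕜] S), ∀ M ∈ L, Submodule.map (U.toLinearEquiv : S →ₗ[𝕜] S) M ∈ L)
    {B : Submodule 𝕜 S} (hB : B ∈ L) (hBs : B ⊔ Bᗮ ≠ ⊤)
    {s : Submodule 𝕜 S → ℝ} (hs : IsLogicState L s) {u : S} (hu : u ≠ 0) :
    s (𝕜 ∙ u) = 0 := by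
  have hx' : ¬ ∀ x : S, x ∈ B ⊔ Bᗮ := fun h => hBs (Submodule.eq_top_iff'.2 h)
  push_neg at hx'
  obtain ⟨x, hx⟩ := hx'
  have hx0 : x ≠ 0 := fun h => hx (h ▸ zero_mem _)
  obtain ⟨T, hT⟩ := line_transitive (𝕜 := 𝕜) hx0 hu
  have hs' := state_pullback hs hsymm T
  have hvan := state_vanishes_on_outside_line hL hs' hB hx
  simpa only [hT] using hvan


/-- For a (symmetric) pre-Hilbert space logic `(S, L)`: if `L` contains a non-splitting
subspace `B` (`B + Bᗮ ≠ S`), then every state on `(S, L)` is free, i.e. vanishes on all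
one-dimensional subspaces; and `(S, L)` admits a non-free state (one not vanishing on some
finite dimensional member of `L`) if and only if every member of `L` is splitting. -/
theorem nonfree_state_iff_splitting [Nontrivial S]
    (L : Set (Submodule 𝕜 S)) (hL : IsPreHilbertLogic L)
    (hsymm : ∀ (U : S ≃ₗᵢ[𝕜] S), ∀ M ∈ L, Submodule.map (U.toLinearEquiv : S →ₗ[𝕜] S) M ∈ L) :
    ((∃ B ∈ L, B ⊔ Bᗮ ≠ ⊤) →
      ∀ s : Submodule 𝕜 S → ℝ, IsLogicState L s → ∀ u : S, u ≠ 0 → s (𝕜 ∙ u) = 0) ∧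
      ((∃ s : Submodule 𝕜 S → ℝ, IsLogicState L s ∧
          ∃ M ∈ L, FiniteDimensional 𝕜 M ∧ s M ≠ 0) ↔
        ∀ M ∈ L, M ⊔ Mᗮ = ⊤) := by
  constructor
  · rintro ⟨B, hB, hBs⟩ s hs u hu
    exact state_free_of_nonsplitting hL hsymm hB hBs hs hu
  · constructor
    · rintro ⟨s, hs, M, hM, hfin, hsM⟩ N hN
      by_contra hNs
      have hfree : ∀ u : S, u ≠ 0 → s (𝕜 ∙ u) = 0 :=
        fun u hu => state_free_of_nonsplitting hL hsymm hN hNs hs hu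
      exact hsM (state_vanishes_findim hL hs hfree M hM hfin)
    · exact fun hsplit => exists_nonfree_state hL hsplit
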